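/- Define x_n^{(d)} = A_{2n}^{(d)} / binomial(2n, n). Then for all d ≥ 1 and n ≥ 0, x_n^{(d+1)} = sum_{k=0}^{n} binomial(n,k)^2 * x_k^{(d)}. -/

import Mathlib

/-- The step of the walk on `ℤ^d` determined by a coordinate and a sign. -/
def stepVec (d : ℕ) (s : Fin d × Bool) : Fin d → ℤ :=
  fun t => if t = s.1 then (if s.2 then 1 else -1) else 0

/-- `closedCount d n` is the number `A_{2n}^{(d)}` of walks of length `2n` on `ℤ^d`
starting and ending at the origin. -/
noncomputable def closedCount (d n : ℕ) : ℕ :=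
  Nat.card {f : Fin (2 * n) → Fin d × Bool // ∑ i, stepVec d (f i) = 0}

/-- `x_n^{(d)} = A_{2n}^{(d)} / C(2n, n)`, as a rational number. -/
noncomputable def xSeq (d n : ℕ) : ℚ :=
  (closedCount d n : ℚ) / ((2 * n).choose n : ℚ)

open Finset

/-- Closed-walk count with an arbitrary index type of even cardinality. -/
lemma natCard_reindex {α : Type} [Fintype α] (d m : ℕ) (h : Fintype.card α = 2 * m) :
    Nat.card {f : α → Fin d × Bool // ∑ i, stepVec d (f i) = 0} = closedCount d m := by
  obtain e := Fintype.equivFinOfCardEq h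
  rw [closedCount]
  apply Nat.card_congr
  refine Equiv.subtypeEquiv (Equiv.arrowCongr e (Equiv.refl _)) ?_
  intro f
  have : ∑ j, stepVec d (f (e.symm j)) = ∑ i, stepVec d (f i) :=
    Equiv.sum_comp e.symm (fun i => stepVec d (f i))
  constructor
  · intro hf
    simpa [Equiv.arrowCongr, this] using hf
  · intro hf
    simpa [Equiv.arrowCongr, this] using hf

lemma bal_sum_eq {α : Type} [Fintype α] (g : α → Bool) :
    (∑ i, (if g i then (1 : ℤ) else -1)) =
      2 * ((Finset.univ.filter fun i => g i = true).card : ℤ) - Fintype.card α := by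
  have h1 : ∀ i : α, (if g i then (1 : ℤ) else -1) = (if g i = true then (2 : ℤ) else 0) - 1 := by
    intro i; cases g i <;> simp
  rw [Finset.sum_congr rfl fun i _ => h1 i, Finset.sum_sub_distrib]
  have h2 : (∑ i : α, if g i = true then (2 : ℤ) else 0)
      = ∑ i ∈ Finset.univ.filter (fun i => g i = true), (2 : ℤ) := (Finset.sum_filter _ _).symm
  rw [h2, Finset.sum_const, Finset.sum_const, Finset.card_univ]
  push_cast
  ring

lemma natCard_bal_even {α : Type} [Fintype α] [DecidableEq α] (j : ℕ)
    (h : Fintype.card α = 2 * j) :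
    Nat.card {g : α → Bool // ∑ i, (if g i then (1 : ℤ) else -1) = 0} = (2 * j).choose j := by
  have key : ∀ g : α → Bool,
      ((∑ i, (if g i then (1 : ℤ) else -1)) = 0) ↔
        (Finset.univ.filter fun i => g i = true).card = j := by
    intro g
    rw [bal_sum_eq, h]
    constructor
    · intro hg; push_cast at hg; omega
    · intro hg; rw [hg]; push_cast; ring
  have e : {g : α → Bool // ∑ i, (if g i then (1 : ℤ) else -1) = 0} ≃
      {s : Finset α // s.card = j} := by
    refine ⟨fun g => ⟨Finset.univ.filter fun i => g.1 i = true, (key g.1).1 g.2⟩,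
      fun s => ⟨fun i => i ∈ s.1, ?_⟩, ?_, ?_⟩
    · rw [key]; simpa using s.2
    · rintro ⟨g, hg⟩; ext i; simp
    · rintro ⟨s, hs⟩; ext i; simp
  rw [Nat.card_congr e, Nat.card_eq_fintype_card, Fintype.card_finset_len, ← h]

lemma natCard_bal_odd {α : Type} [Fintype α] (h : ¬ 2 ∣ Fintype.card α) :
    Nat.card {g : α → Bool // ∑ i, (if g i then (1 : ℤ) else -1) = 0} = 0 := by
  have he : IsEmpty {g : α → Bool // ∑ i, (if g i then (1 : ℤ) else -1) = 0} := by
    refine ⟨fun g => h ?_⟩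
    have hz := congrArg (fun z : ℤ => (z : ZMod 2)) g.2
    simp only [Int.cast_sum, Int.cast_zero] at hz
    have h2 : ∀ i : α, (((if g.1 i then (1 : ℤ) else -1) : ℤ) : ZMod 2) = 1 := by
      intro i; cases g.1 i <;> simp <;> decide
    rw [Finset.sum_congr rfl fun i _ => h2 i, Finset.sum_const, Finset.card_univ] at hz
    have hz2 : ((Fintype.card α : ℕ) : ZMod 2) = 0 := by simpa using hz
    exact (ZMod.natCast_eq_zero_iff _ _).1 hz2
  exact Nat.card_of_isEmpty

section Glue

variable {N d : ℕ} (s : Finset (Fin N))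

/-- Glue a sign pattern on `s` with a `d`-dimensional walk on `sᶜ` into a walk on `ℤ^{d+1}`. -/
def glue (g : {i // i ∈ s} → Bool) (h : {i // i ∈ sᶜ} → Fin d × Bool) :
    Fin N → Fin (d + 1) × Bool := fun i =>
  if hi : i ∈ s then (Fin.last d, g ⟨i, hi⟩)
  else ((h ⟨i, Finset.mem_compl.2 hi⟩).1.castSucc, (h ⟨i, Finset.mem_compl.2 hi⟩).2)

lemma glue_mem {g : {i // i ∈ s} → Bool} {h : {i // i ∈ sᶜ} → Fin d × Bool}
    {i : Fin N} (hi : i ∈ s) : glue s g h i = (Fin.last d, g ⟨i, hi⟩) :=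
  dif_pos hi

lemma glue_not_mem {g : {i // i ∈ s} → Bool} {h : {i // i ∈ sᶜ} → Fin d × Bool}
    {i : Fin N} (hi : i ∉ s) :
    glue s g h i = ((h ⟨i, Finset.mem_compl.2 hi⟩).1.castSucc,
      (h ⟨i, Finset.mem_compl.2 hi⟩).2) := dif_neg hi

lemma glue_filter (g : {i // i ∈ s} → Bool) (h : {i // i ∈ sᶜ} → Fin d × Bool) :
    (Finset.univ.filter fun i => (glue s g h i).1 = Fin.last d) = s := by
  ext i
  simp only [Finset.mem_filter, Finset.mem_univ, true_and]
  by_cases hi : i ∈ s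
  · simp [glue_mem s hi, hi]
  · simp only [glue_not_mem s hi, hi, iff_false]
    exact (Fin.castSucc_lt_last _).ne

lemma glue_sum_zero_iff (g : {i // i ∈ s} → Bool) (h : {i // i ∈ sᶜ} → Fin d × Bool) :
    (∑ i, stepVec (d + 1) (glue s g h i) = 0) ↔
      ((∑ i, (if g i then (1 : ℤ) else -1)) = 0 ∧ (∑ i, stepVec d (h i)) = 0) := by
  set V := ∑ i, stepVec (d + 1) (glue s g h i) with hV
  have hVt : ∀ t, V t = ∑ i, stepVec (d + 1) (glue s g h i) t := by
    intro t; rw [hV]; exact Finset.sum_apply t _ _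
  have claim1 : V (Fin.last d) = ∑ i, (if g i then (1 : ℤ) else -1) := by
    rw [hVt, ← Finset.sum_add_sum_compl s (fun i => stepVec (d + 1) (glue s g h i) (Fin.last d))]
    have h1 : ∑ i ∈ s, stepVec (d + 1) (glue s g h i) (Fin.last d)
        = ∑ i, (if g i then (1 : ℤ) else -1) := by
      rw [← Finset.sum_attach s fun i => stepVec (d + 1) (glue s g h i) (Fin.last d),
        Finset.univ_eq_attach]
      refine Finset.sum_congr rfl fun i _ => ?_
      rw [glue_mem s i.2]
      simp [stepVec]
    have h2 : ∑ i ∈ sᶜ, stepVec (d + 1) (glue s g h i) (Fin.last d) = 0 := by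
      refine Finset.sum_eq_zero fun i hi => ?_
      rw [glue_not_mem s (Finset.mem_compl.1 hi)]
      simp [stepVec, ((Fin.castSucc_lt_last _).ne).symm]
    rw [h1, h2, add_zero]
  have claim2 : ∀ u : Fin d, V u.castSucc = (∑ i, stepVec d (h i)) u := by
    intro u
    rw [hVt, ← Finset.sum_add_sum_compl s (fun i => stepVec (d + 1) (glue s g h i) u.castSucc)]
    have h1 : ∑ i ∈ s, stepVec (d + 1) (glue s g h i) u.castSucc = 0 := by
      refine Finset.sum_eq_zero fun i hi => ?_
      rw [glue_mem s hi]
      simp [stepVec, (Fin.castSucc_lt_last u).ne]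
    have h2 : ∑ i ∈ sᶜ, stepVec (d + 1) (glue s g h i) u.castSucc
        = ∑ i : {i // i ∈ sᶜ}, stepVec d (h i) u := by
      rw [← Finset.sum_attach sᶜ fun i => stepVec (d + 1) (glue s g h i) u.castSucc,
        Finset.univ_eq_attach]
      refine Finset.sum_congr rfl fun i _ => ?_
      rw [glue_not_mem s (Finset.mem_compl.1 i.2)]
      simp only [stepVec, Fin.castSucc_inj, Subtype.coe_eta]
    rw [h1, h2, zero_add, Finset.sum_apply]
  constructor
  · intro hz
    have hz' : ∀ t, V t = 0 := fun t => by rw [hz]; rfl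
    refine ⟨by rw [← claim1]; exact hz' _, funext fun u => by rw [← claim2]; exact hz' _⟩
  · rintro ⟨hg, hh⟩
    have hz' : ∀ t, V t = 0 := by
      intro t
      refine Fin.lastCases ?_ ?_ t
      · rw [claim1, hg]
      · intro u; rw [claim2, hh]; rfl
    funext t; exact hz' t

lemma fiber_card (d : ℕ) {N : ℕ} (s : Finset (Fin N)) :
    Nat.card {f : Fin N → Fin (d + 1) × Bool //
        (∑ i, stepVec (d + 1) (f i) = 0) ∧
          (Finset.univ.filter fun i => (f i).1 = Fin.last d) = s} =
      Nat.card {g : {i // i ∈ s} → Bool // ∑ i, (if g i then (1 : ℤ) else -1) = 0} *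
        Nat.card {h : {i // i ∈ sᶜ} → Fin d × Bool // ∑ i, stepVec d (h i) = 0} := by
  rw [← Nat.card_prod]
  symm
  apply Nat.card_eq_of_bijective
    (f := fun p => ⟨glue s p.1.1 p.2.1,
      (glue_sum_zero_iff s p.1.1 p.2.1).2 ⟨p.1.2, p.2.2⟩, glue_filter s p.1.1 p.2.1⟩)
  constructor
  · rintro ⟨⟨g, hg⟩, ⟨h, hh⟩⟩ ⟨⟨g', hg'⟩, ⟨h', hh'⟩⟩ heq
    have heq' : glue s g h = glue s g' h' := congrArg Subtype.val heq
    have hgg : g = g' := by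
      funext i
      have := congrFun heq' i.1
      rw [glue_mem s i.2, glue_mem s i.2] at this
      simpa using congrArg Prod.snd this
    have hhh : h = h' := by
      funext i
      have hi : i.1 ∉ s := Finset.mem_compl.1 i.2
      have := congrFun heq' i.1
      rw [glue_not_mem s hi, glue_not_mem s hi] at this
      have h1 := congrArg Prod.fst this
      have h2 := congrArg Prod.snd this
      simp only at h1 h2
      have h1' : (h ⟨i.1, Finset.mem_compl.2 hi⟩).1 = (h' ⟨i.1, Finset.mem_compl.2 hi⟩).1 :=
        Fin.castSucc_injective _ h1
      have : (⟨i.1, Finset.mem_compl.2 hi⟩ : {i // i ∈ sᶜ}) = i := Subtype.ext rfl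
      rw [this] at h1' h2
      exact Prod.ext h1' h2
    simp [hgg, hhh]
  · rintro ⟨f, hf, hfilt⟩
    have hmem : ∀ i, (f i).1 = Fin.last d ↔ i ∈ s := by
      intro i
      rw [← hfilt]
      simp
    have hne : ∀ i : {i // i ∈ sᶜ}, ((f i.1).1 : ℕ) < d := by
      intro i
      have : (f i.1).1 ≠ Fin.last d := fun hc => (Finset.mem_compl.1 i.2) ((hmem i.1).1 hc)
      have hlt : (f i.1).1 < Fin.last d := lt_of_le_of_ne (Fin.le_last _) this
      exact hlt
    refine ⟨⟨⟨fun i => (f i.1).2, ?_⟩, ⟨fun i => ((f i.1).1.castLT (hne i), (f i.1).2), ?_⟩⟩, ?_⟩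
    rotate_right
    · have hglue : glue s (fun i : {i // i ∈ s} => (f i.1).2)
          (fun i : {i // i ∈ sᶜ} => ((f i.1).1.castLT (hne i), (f i.1).2)) = f := by
        funext i
        by_cases hi : i ∈ s
        · rw [glue_mem s hi]
          exact Prod.ext ((hmem i).2 hi).symm rfl
        · rw [glue_not_mem s hi]
          exact Prod.ext (Fin.castSucc_castLT _ _) rfl
      exact Subtype.ext hglue
    all_goals {
      have hglue : glue s (fun i : {i // i ∈ s} => (f i.1).2)
          (fun i : {i // i ∈ sᶜ} => ((f i.1).1.castLT (hne i), (f i.1).2)) = f := by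
        funext i
        by_cases hi : i ∈ s
        · rw [glue_mem s hi]
          exact Prod.ext ((hmem i).2 hi).symm rfl
        · rw [glue_not_mem s hi]
          exact Prod.ext (Fin.castSucc_castLT _ _) rfl
      have := hf
      rw [← hglue] at this
      have := (glue_sum_zero_iff s _ _).1 this
      first | exact this.1 | exact this.2
    }

end Glue

lemma closedCount_succ (d n : ℕ) :
    closedCount (d + 1) n =
      ∑ j ∈ Finset.range (n + 1),
        (2 * n).choose (2 * j) * ((2 * j).choose j) * closedCount d (n - j) := by
  classical
  -- evaluate each fiber
  have hfiber : ∀ s : Finset (Fin (2 * n)),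
      Nat.card {f : Fin (2 * n) → Fin (d + 1) × Bool //
          (∑ i, stepVec (d + 1) (f i) = 0) ∧
            (Finset.univ.filter fun i => (f i).1 = Fin.last d) = s} =
        if 2 ∣ s.card then s.card.choose (s.card / 2) * closedCount d (n - s.card / 2)
        else 0 := by
    intro s
    rw [fiber_card]
    by_cases hdvd : 2 ∣ s.card
    · rw [if_pos hdvd]
      obtain ⟨j, hj⟩ := hdvd
      have hcards : Fintype.card {i // i ∈ s} = 2 * j := by
        rw [Fintype.card_coe, hj]
      have hjn : j ≤ n := by
        have hs2n : s.card ≤ 2 * n := by simpa using Finset.card_le_univ s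
        omega
      have hcardc : Fintype.card {i // i ∈ sᶜ} = 2 * (n - j) := by
        rw [Fintype.card_coe, Finset.card_compl, Fintype.card_fin, hj]
        omega
      rw [natCard_bal_even j hcards, natCard_reindex d (n - j) hcardc, hj]
      have : 2 * j / 2 = j := by omega
      rw [this]
    · rw [if_neg hdvd, natCard_bal_odd, zero_mul]
      rwa [Fintype.card_coe]
  have hpart : closedCount (d + 1) n =
      ∑ s : Finset (Fin (2 * n)),
        Nat.card {f : Fin (2 * n) → Fin (d + 1) × Bool //
          (∑ i, stepVec (d + 1) (f i) = 0) ∧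
            (Finset.univ.filter fun i => (f i).1 = Fin.last d) = s} := by
    rw [closedCount]
    rw [Nat.card_congr (Equiv.sigmaFiberEquiv
      (fun x : {f : Fin (2 * n) → Fin (d + 1) × Bool // ∑ i, stepVec (d + 1) (f i) = 0} =>
        Finset.univ.filter fun i => (x.1 i).1 = Fin.last d)).symm]
    rw [Nat.card_eq_fintype_card, Fintype.card_sigma]
    refine Finset.sum_congr rfl fun s _ => ?_
    rw [← Nat.card_eq_fintype_card]
    exact Nat.card_congr (Equiv.subtypeSubtypeEquivSubtypeInter
      (fun f : Fin (2 * n) → Fin (d + 1) × Bool => ∑ i, stepVec (d + 1) (f i) = 0)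
      (fun f => (Finset.univ.filter fun i => (f i).1 = Fin.last d) = s))
  rw [hpart, Finset.sum_congr rfl fun s _ => hfiber s]
  clear hpart hfiber
  -- group subsets by cardinality
  have hps : (Finset.univ : Finset (Finset (Fin (2 * n)))) =
      (Finset.univ : Finset (Fin (2 * n))).powerset := (Finset.powerset_univ).symm
  rw [hps, Finset.sum_powerset]
  have hcu : (Finset.univ : Finset (Fin (2 * n))).card = 2 * n := by
    rw [Finset.card_univ, Fintype.card_fin]
  rw [hcu]
  have hinner : ∀ m ∈ Finset.range (2 * n + 1),
      (∑ t ∈ Finset.powersetCard m (Finset.univ : Finset (Fin (2 * n))),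
        (if 2 ∣ t.card then t.card.choose (t.card / 2) * closedCount d (n - t.card / 2) else 0)) =
      (2 * n).choose m *
        (if 2 ∣ m then m.choose (m / 2) * closedCount d (n - m / 2) else 0) := by
    intro m _
    rw [Finset.sum_congr rfl fun t ht => by
      rw [(Finset.mem_powersetCard.1 ht).2], Finset.sum_const, Finset.card_powersetCard, hcu,
      smul_eq_mul]
  rw [Finset.sum_congr rfl hinner]
  -- reindex over even values
  have hsub : (Finset.range (n + 1)).image (fun j => 2 * j) ⊆ Finset.range (2 * n + 1) := by
    intro m hm
    simp only [Finset.mem_image, Finset.mem_range] at hm ⊢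
    obtain ⟨j, hj, rfl⟩ := hm
    omega
  rw [← Finset.sum_subset hsub ?vanish]
  · rw [Finset.sum_image (by intro a _ b _ h; simp only at h; omega)]
    refine Finset.sum_congr rfl fun j _ => ?_
    have h2 : (2 : ℕ) ∣ 2 * j := ⟨j, rfl⟩
    rw [if_pos h2]
    have : 2 * j / 2 = j := by omega
    rw [this, mul_assoc]
  case vanish =>
    intro m hm hnm
    have hodd : ¬ 2 ∣ m := by
      intro ⟨j, hj⟩
      apply hnm
      simp only [Finset.mem_range] at hm
      simp only [Finset.mem_image, Finset.mem_range]
      exact ⟨j, by omega, by omega⟩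
    rw [if_neg hodd, mul_zero]

lemma choose_key (a b : ℕ) :
    ((2 * (a + b)).choose (2 * a) : ℚ) * ((2 * a).choose a) * ((2 * b).choose b) =
      ((2 * (a + b)).choose (a + b)) * ((a + b).choose a) ^ 2 := by
  have e1 : 2 * (a + b) - 2 * a = 2 * b := by omega
  have e2 : 2 * a - a = a := by omega
  have e3 : 2 * b - b = b := by omega
  have e4 : 2 * (a + b) - (a + b) = a + b := by omega
  have e5 : a + b - a = b := by omega
  rw [Nat.cast_choose (K := ℚ) (show 2 * a ≤ 2 * (a + b) by omega),
    Nat.cast_choose (K := ℚ) (show a ≤ 2 * a by omega),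
    Nat.cast_choose (K := ℚ) (show b ≤ 2 * b by omega),
    Nat.cast_choose (K := ℚ) (show a + b ≤ 2 * (a + b) by omega),
    Nat.cast_choose (K := ℚ) (show a ≤ a + b by omega), e1, e2, e3, e4, e5]
  have f1 : ((Nat.factorial (2 * (a + b)) : ℕ) : ℚ) ≠ 0 := Nat.cast_ne_zero.2 (Nat.factorial_ne_zero _)
  have f2 : ((Nat.factorial (2 * a) : ℕ) : ℚ) ≠ 0 := Nat.cast_ne_zero.2 (Nat.factorial_ne_zero _)
  have f3 : ((Nat.factorial (2 * b) : ℕ) : ℚ) ≠ 0 := Nat.cast_ne_zero.2 (Nat.factorial_ne_zero _)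
  have f4 : ((Nat.factorial (a + b) : ℕ) : ℚ) ≠ 0 := Nat.cast_ne_zero.2 (Nat.factorial_ne_zero _)
  have f5 : ((Nat.factorial (a) : ℕ) : ℚ) ≠ 0 := Nat.cast_ne_zero.2 (Nat.factorial_ne_zero _)
  have f6 : ((Nat.factorial (b) : ℕ) : ℚ) ≠ 0 := Nat.cast_ne_zero.2 (Nat.factorial_ne_zero _)
  field_simp

theorem xSeq_succ (d n : ℕ) (hd : 1 ≤ d) :
    xSeq (d + 1) n = ∑ k ∈ Finset.range (n + 1), (n.choose k : ℚ) ^ 2 * xSeq d k := by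
  have hrefl : ∑ k ∈ Finset.range (n + 1), (n.choose k : ℚ) ^ 2 * xSeq d k
      = ∑ j ∈ Finset.range (n + 1), (n.choose (n - j) : ℚ) ^ 2 * xSeq d (n - j) := by
    rw [← Finset.sum_range_reflect]
    refine Finset.sum_congr rfl fun j hj => ?_
    have hj' : j ≤ n := by simpa [Nat.lt_succ_iff] using hj
    congr 2 <;> omega
  rw [hrefl]
  rw [xSeq, closedCount_succ, Nat.cast_sum, Finset.sum_div]
  refine Finset.sum_congr rfl fun j hj => ?_
  have hjn : j ≤ n := by simpa [Nat.lt_succ_iff] using hj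
  rw [xSeq]
  have hcs : (n.choose (n - j) : ℚ) = n.choose j := by
    rw [Nat.choose_symm hjn]
  rw [hcs]
  push_cast
  have key := choose_key j (n - j)
  have hab : j + (n - j) = n := by omega
  rw [hab] at key
  have hpos1 : ((2 * n).choose n : ℚ) ≠ 0 :=
    Nat.cast_ne_zero.2 (Nat.choose_pos (by omega)).ne'
  have hpos2 : ((2 * (n - j)).choose (n - j) : ℚ) ≠ 0 :=
    Nat.cast_ne_zero.2 (Nat.choose_pos (by omega)).ne'
  field_simp
  linear_combination (closedCount d (n - j) : ℚ) * key
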